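/- The function v(y) = y^{1−d/2+iω} U(1/2 − d/4 + iω/2 − λ, 1 + iω, y²/4), where U is the Tricomi confluent hypergeometric function and ω = √(8d−d²−8)/2, solves the eigenvalue equation −v'' − ((d−1)/y − y/2) v' − (d−1)/y² · v = λ v on (0,∞). -/

import Mathlib

open Real Complex

private lemma helper_hasDerivAt (F : ℂ → ℂ) (hF : Differentiable ℂ F) (c : ℂ) (x : ℝ)
    (hx : 0 < x) :
    HasDerivAt (fun t : ℝ => (t : ℂ) ^ c * F ((t : ℂ) ^ 2 / 4))
      (c * (x : ℂ) ^ (c - 1) * F ((x : ℂ) ^ 2 / 4)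
        + (x : ℂ) ^ c * (deriv F ((x : ℂ) ^ 2 / 4) * ((x : ℂ) / 2))) x := by
  have hx0 : (0:ℝ) < ((x : ℂ)).re := by simpa using hx
  have h1 : HasDerivAt (fun t : ℝ => (t : ℂ) ^ c) (c * (x : ℂ) ^ (c - 1)) x := by
    have := (HasDerivAt.cpow_const (c := c) (hasDerivAt_id (x : ℂ)) (Or.inl hx0)).comp_ofReal
    simpa using this
  have hz : HasDerivAt (fun z : ℂ => z ^ 2 / 4) ((x : ℂ) / 2) (x : ℂ) := by
    have := (hasDerivAt_pow 2 (x : ℂ)).div_const 4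
    convert this using 1
    exacts [rfl, rfl, by norm_num; ring]
  have h2 : HasDerivAt (fun t : ℝ => F ((t : ℂ) ^ 2 / 4))
      (deriv F ((x : ℂ) ^ 2 / 4) * ((x : ℂ) / 2)) x :=
    ((hF.differentiableAt.hasDerivAt.comp _ hz).comp_ofReal)
  exact h1.mul h2

theorem equator_linearized_eigenfunction (d : ℕ) (hd3 : 3 ≤ d) (hd6 : d ≤ 6) (lam : ℂ)
    (W : ℂ → ℂ) (hW2 : ContDiff ℂ 2 W)
    (hW : ∀ z : ℂ, 0 < z.re →
      z * iteratedDeriv 2 W z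
        + ((1 + Complex.I * (Real.sqrt (8 * (d : ℝ) - (d : ℝ) ^ 2 - 8) / 2 : ℝ)) - z) * deriv W z
        - ((1 : ℂ) / 2 - (d : ℂ) / 4
            + Complex.I * (Real.sqrt (8 * (d : ℝ) - (d : ℝ) ^ 2 - 8) / 2 : ℝ) / 2 - lam) * W z
        = 0)
    (v : ℝ → ℂ)
    (hv : v = fun y : ℝ =>
      (y : ℂ) ^ ((1 : ℂ) - (d : ℂ) / 2
          + Complex.I * (Real.sqrt (8 * (d : ℝ) - (d : ℝ) ^ 2 - 8) / 2 : ℝ))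
        * W ((y : ℂ) ^ 2 / 4)) :
    ∀ y : ℝ, 0 < y →
      -(deriv (deriv v) y) - (((d : ℂ) - 1) / (y : ℂ) - (y : ℂ) / 2) * deriv v y
        - ((d : ℂ) - 1) / (y : ℂ) ^ 2 * v y = lam * v y := by
  intro y hy
  subst hv
  have hsnn : (0:ℝ) ≤ 8 * (d : ℝ) - (d : ℝ) ^ 2 - 8 := by
    have h3 : (3:ℝ) ≤ (d:ℝ) := by exact_mod_cast hd3
    have h6 : (d:ℝ) ≤ 6 := by exact_mod_cast hd6
    nlinarith
  set ω : ℝ := Real.sqrt (8 * (d : ℝ) - (d : ℝ) ^ 2 - 8) / 2 with hωdef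
  have hω2 : ((ω:ℝ):ℂ)^2 = (8 * (d:ℂ) - (d:ℂ)^2 - 8)/4 := by
    have h1 : ω^2 = (8 * (d:ℝ) - (d:ℝ)^2 - 8)/4 := by
      rw [hωdef, div_pow, Real.sq_sqrt hsnn]; ring
    calc ((ω:ℝ):ℂ)^2 = ((ω^2 : ℝ) : ℂ) := by push_cast; ring
      _ = _ := by rw [h1]; push_cast; ring
  have hind : ((1:ℂ) - (d:ℂ)/2 + Complex.I * (ω:ℝ))^2
      + ((d:ℂ)-2) * ((1:ℂ) - (d:ℂ)/2 + Complex.I * (ω:ℝ)) + ((d:ℂ)-1) = 0 := by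
    linear_combination ((ω:ℝ):ℂ)^2 * Complex.I_sq - hω2
  set μ : ℂ := (1:ℂ) - (d:ℂ)/2 + Complex.I * (ω:ℝ) with hμ
  -- differentiability
  have hWd : Differentiable ℂ W := hW2.differentiable (by norm_num)
  have hW1 : Differentiable ℂ (deriv W) := by
    have h : ContDiff ℂ ((1:ℕ)+1) W := by exact_mod_cast hW2
    exact (contDiff_succ_iff_deriv.mp h).2.2.differentiable (by norm_num)
  -- Kummer equation at z = y^2/4
  have hzre : (0:ℝ) < (((y:ℂ)^2/4)).re := by
    have h : ((y:ℂ)^2/4) = ((y^2/4 : ℝ) : ℂ) := by push_cast; ring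
    rw [h, Complex.ofReal_re]; positivity
  have h2W : iteratedDeriv 2 W = deriv (deriv W) := by
    funext z; rw [show (2:ℕ) = 1+1 from rfl, iteratedDeriv_succ, iteratedDeriv_one]
  have hK := hW ((y:ℂ)^2/4) hzre
  rw [h2W] at hK
  -- derivative computations
  have hyC : (y:ℂ) ≠ 0 := Complex.ofReal_ne_zero.mpr hy.ne'
  have estep : ∀ c : ℂ, ∀ x : ℝ, 0 < x → ((x:ℂ))^(c+1) = (x:ℂ)^c * x := by
    intro c x hx
    rw [Complex.cpow_add _ _ (Complex.ofReal_ne_zero.mpr hx.ne'), Complex.cpow_one]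
  have hd1 : ∀ x : ℝ, 0 < x → HasDerivAt
      (fun t : ℝ => (t : ℂ) ^ μ * W ((t : ℂ) ^ 2 / 4))
      (μ * ((x:ℂ)^(μ-1) * W ((x:ℂ)^2/4))
        + (1/2 : ℂ) * ((x:ℂ)^(μ+1) * deriv W ((x:ℂ)^2/4))) x := by
    intro x hx
    have h := helper_hasDerivAt W hWd μ x hx
    convert h using 1
    rw [estep μ x hx, show μ = (μ-1)+1 by ring, estep (μ-1) x hx]
    ring
  set G : ℝ → ℂ := fun x => μ * ((x:ℂ)^(μ-1) * W ((x:ℂ)^2/4))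
        + (1/2 : ℂ) * ((x:ℂ)^(μ+1) * deriv W ((x:ℂ)^2/4)) with hG
  have hd2 : HasDerivAt G
      (μ * ((μ-1) * (y:ℂ)^(μ-1-1) * W ((y:ℂ)^2/4)
            + (y:ℂ)^(μ-1) * (deriv W ((y:ℂ)^2/4) * ((y:ℂ)/2)))
        + (1/2 : ℂ) * ((μ+1) * (y:ℂ)^(μ+1-1) * deriv W ((y:ℂ)^2/4)
            + (y:ℂ)^(μ+1) * (deriv (deriv W) ((y:ℂ)^2/4) * ((y:ℂ)/2)))) y := by
    exact ((helper_hasDerivAt W hWd (μ-1) y hy).const_mul μ).add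
      ((helper_hasDerivAt (deriv W) hW1 (μ+1) y hy).const_mul (1/2 : ℂ))
  have hEq : deriv (fun t : ℝ => (t : ℂ) ^ μ * W ((t : ℂ) ^ 2 / 4)) =ᶠ[nhds y] G :=
    Filter.eventuallyEq_of_mem (Ioi_mem_nhds hy) (fun x hx => (hd1 x hx).deriv)
  rw [hEq.deriv_eq, hd2.deriv, (hd1 y hy).deriv]
  -- cpow algebra
  rw [show μ-1-1 = μ-2 by ring, show μ+1-1 = μ by ring]
  have ea : (y:ℂ)^(μ-1) = (y:ℂ)^(μ-2) * y := by
    have h := estep (μ-2) y hy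
    rw [show μ-2+1 = μ-1 by ring] at h
    exact h
  have eb : (y:ℂ)^μ = (y:ℂ)^(μ-2) * y * y := by
    have h := estep (μ-1) y hy
    rw [show μ-1+1 = μ by ring, ea] at h
    exact h
  have ec : (y:ℂ)^(μ+1) = (y:ℂ)^(μ-2) * y * y * y := by
    have h := estep μ y hy
    rw [eb] at h
    exact h
  beta_reduce
  rw [ea, eb, ec]
  field_simp [hyC]
  linear_combination ((-4 : ℂ) * (y:ℂ)^2) * hK
    + ((-4 : ℂ) * W ((y:ℂ)^2/4)) * hind
    + ((-4 : ℂ) * (y:ℂ)^2 * deriv W ((y:ℂ)^2/4)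
        + (2 : ℂ) * (y:ℂ)^2 * W ((y:ℂ)^2/4)) * hμ
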